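/- There exist EESs E and F that are step trace equivalent but not interleaving bisimilar. Concretely, E with events a_1, a_2 labelled a and b_1, b_2 labelled b, causality a_1 < b_1, a_1 < b_2, a_2 < b_2; and F with events a_1', a_2' labelled a and b_1', b_2' labelled b, causality a_1' < b_1', a_2' < b_2', satisfy E ≈_st F but E ≉_ib F. -/

import Mathlib

/-- A labelled prime event structure over alphabet `A`. -/
structure PES (A : Type*) where
  E : Type*
  le : E → E → Prop
  conflict : E → E → Prop
  lab : E → A
  le_refl : ∀ e, le e e
  le_trans : ∀ e e' e'', le e e' → le e' e'' → le e e''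
  le_antisymm : ∀ e e', le e e' → le e' e → e = e'
  finite_past : ∀ e, Set.Finite {e' | le e' e ∧ e' ≠ e}
  conflict_irrefl : ∀ e, ¬ conflict e e
  conflict_symm : ∀ e e', conflict e e' → conflict e' e
  conflict_inherit : ∀ e e' e'', le e e' → e ≠ e' → conflict e e'' → conflict e' e''

namespace PES

variable {A : Type*}

/-- A coherence space: a PES with empty (strict) causality. -/
def IsCS (P : PES A) : Prop := ∀ e e', P.le e e' → e = e'

/-- An elementary event structure: a PES with empty conflict. -/
def IsEES (P : PES A) : Prop := ∀ e e', ¬ P.conflict e e'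

/-- Concurrency. -/
def co (P : PES A) (e e' : P.E) : Prop :=
  ¬ P.le e e' ∧ ¬ P.le e' e ∧ ¬ P.conflict e e'

/-- Configurations: finite, conflict-free, downward-closed sets of events. -/
def Config (P : PES A) (X : Set P.E) : Prop :=
  X.Finite ∧ (∀ e ∈ X, ∀ e' ∈ X, ¬ P.conflict e e') ∧
    (∀ e ∈ X, ∀ e', P.le e' e → e' ∈ X)

/-- Single-event labelled transition between configurations. -/
def Trans (P : PES A) (X : Set P.E) (a : A) (X' : Set P.E) : Prop :=
  P.Config X ∧ P.Config X' ∧ ∃ e, e ∉ X ∧ X' = insert e X ∧ P.lab e = a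

/-- `X` can perform the sequential trace `w`. -/
def TraceFrom (P : PES A) : Set P.E → List A → Prop
  | X, [] => P.Config X
  | X, a :: w => ∃ X', P.Trans X a X' ∧ P.TraceFrom X' w

/-- Sequential traces of a PES. -/
def STr (P : PES A) (w : List A) : Prop := P.TraceFrom ∅ w

/-- Interleaving trace equivalence. -/
def ITrEq (P Q : PES A) : Prop := ∀ w : List A, P.STr w ↔ Q.STr w

/-- Interleaving bisimulation. -/
def IBisim (P Q : PES A) (R : Set P.E → Set Q.E → Prop) : Prop :=
  R ∅ ∅ ∧ ∀ X Y, R X Y →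
    (∀ a X', P.Trans X a X' → ∃ Y', Q.Trans Y a Y' ∧ R X' Y') ∧
    (∀ a Y', Q.Trans Y a Y' → ∃ X', P.Trans X a X' ∧ R X' Y')

/-- Interleaving bisimilarity. -/
def IBisimilar (P Q : PES A) : Prop := ∃ R, IBisim P Q R

/-- Step transition, labelled by the multiset of labels of a nonempty set of
pairwise concurrent events added at once. -/
def StepTrans (P : PES A) (X : Set P.E) (m : Multiset A) (X' : Set P.E) : Prop :=
  P.Config X ∧ P.Config X' ∧ X ⊆ X' ∧ ∃ G : Finset P.E, ↑G = X' \ X ∧ G.Nonempty ∧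
    (∀ e ∈ G, ∀ e' ∈ G, e ≠ e' → P.co e e') ∧ Multiset.map P.lab G.val = m

/-- `X` can perform the step trace `s`. -/
def StepTraceFrom (P : PES A) : Set P.E → List (Multiset A) → Prop
  | X, [] => P.Config X
  | X, m :: s => ∃ X', P.StepTrans X m X' ∧ P.StepTraceFrom X' s

/-- Step traces of a PES. -/
def StTr (P : PES A) (s : List (Multiset A)) : Prop := P.StepTraceFrom ∅ s

/-- Step trace equivalence. -/
def STrEq (P Q : PES A) : Prop := ∀ s : List (Multiset A), P.StTr s ↔ Q.StTr s

/-- Step bisimulation. -/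
def SBisim (P Q : PES A) (R : Set P.E → Set Q.E → Prop) : Prop :=
  R ∅ ∅ ∧ ∀ X Y, R X Y →
    (∀ m X', P.StepTrans X m X' → ∃ Y', Q.StepTrans Y m Y' ∧ R X' Y') ∧
    (∀ m Y', Q.StepTrans Y m Y' → ∃ X', P.StepTrans X m X' ∧ R X' Y')

/-- Step bisimilarity. -/
def SBisimilar (P Q : PES A) : Prop := ∃ R, SBisim P Q R

/-- `f` restricts to a label-preserving order-isomorphism from `X` onto `Y`. -/
def IsoOn (P Q : PES A) (f : P.E → Q.E) (X : Set P.E) (Y : Set Q.E) : Prop :=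
  Set.BijOn f X Y ∧ (∀ e ∈ X, ∀ e' ∈ X, (P.le e e' ↔ Q.le (f e) (f e'))) ∧
    ∀ e ∈ X, Q.lab (f e) = P.lab e

/-- The labelled posets induced by `X` and `Y` are isomorphic (same pomset). -/
def PIso (P Q : PES A) (X : Set P.E) (Y : Set Q.E) : Prop :=
  ∃ f, IsoOn P Q f X Y

/-- Pomset trace equivalence: same sets of pomsets of configurations. -/
def PTrEq (P Q : PES A) : Prop :=
  (∀ X, P.Config X → ∃ Y, Q.Config Y ∧ PIso P Q X Y) ∧
  (∀ Y, Q.Config Y → ∃ X, P.Config X ∧ PIso P Q X Y)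

/-- Pomset transition: strictly extending a configuration. -/
def PomTrans (P : PES A) (X X' : Set P.E) : Prop :=
  P.Config X ∧ P.Config X' ∧ X ⊂ X'

/-- Pomset bisimulation: matched extensions must add isomorphic pomsets. -/
def PBisim (P Q : PES A) (R : Set P.E → Set Q.E → Prop) : Prop :=
  R ∅ ∅ ∧ ∀ X Y, R X Y →
    (∀ X', P.PomTrans X X' →
      ∃ Y', Q.PomTrans Y Y' ∧ PIso P Q (X' \ X) (Y' \ Y) ∧ R X' Y') ∧
    (∀ Y', Q.PomTrans Y Y' →
      ∃ X', P.PomTrans X X' ∧ PIso P Q (X' \ X) (Y' \ Y) ∧ R X' Y')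

/-- Pomset bisimilarity. -/
def PBisimilar (P Q : PES A) : Prop := ∃ R, PBisim P Q R

/-- Weak history preserving bisimulation. -/
def WHBisim (P Q : PES A) (R : Set P.E → Set Q.E → Prop) : Prop :=
  R ∅ ∅ ∧ ∀ X Y, R X Y → PIso P Q X Y ∧
    (∀ a X', P.Trans X a X' → ∃ Y', Q.Trans Y a Y' ∧ R X' Y') ∧
    (∀ a Y', Q.Trans Y a Y' → ∃ X', P.Trans X a X' ∧ R X' Y')

/-- Weak history preserving bisimilarity. -/
def WHBisimilar (P Q : PES A) : Prop := ∃ R, WHBisim P Q R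

/-- History preserving bisimulation: triples `(X, Y, f)`. -/
def HBisim (P Q : PES A) (R : Set P.E → Set Q.E → (P.E → Q.E) → Prop) : Prop :=
  (∃ f, R ∅ ∅ f) ∧ ∀ X Y f, R X Y f → IsoOn P Q f X Y ∧
    (∀ a X', P.Trans X a X' →
      ∃ Y' f', Q.Trans Y a Y' ∧ R X' Y' f' ∧ ∀ e ∈ X, f' e = f e) ∧
    (∀ a Y', Q.Trans Y a Y' →
      ∃ X' f', P.Trans X a X' ∧ R X' Y' f' ∧ ∀ e ∈ X, f' e = f e)

/-- History preserving bisimilarity. -/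
def HBisimilar (P Q : PES A) : Prop := ∃ R, HBisim P Q R

/-- Closure under backward transitions, as needed for hereditary hp-bisimulations. -/
def Hereditary (P Q : PES A) (R : Set P.E → Set Q.E → (P.E → Q.E) → Prop) : Prop :=
  ∀ X Y f, R X Y f →
    (∀ a X', P.Trans X' a X → R X' (f '' X') f) ∧
    (∀ a Y', Q.Trans Y' a Y → R {e ∈ X | f e ∈ Y'} Y' f)

/-- Hereditary history preserving bisimilarity. -/
def HHBisimilar (P Q : PES A) : Prop := ∃ R, HBisim P Q R ∧ Hereditary P Q R

/-- Isomorphism of PESs. -/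
def Iso (P Q : PES A) : Prop :=
  ∃ f : P.E ≃ Q.E, (∀ e e', P.le e e' ↔ Q.le (f e) (f e')) ∧
    (∀ e e', P.conflict e e' ↔ Q.conflict (f e) (f e')) ∧
    ∀ e, Q.lab (f e) = P.lab e

end PES


/-- `a := true`, `b := false`. Events `0,1` labelled `a`, events `2,3` labelled `b`;
causality `0 < 2`, `0 < 3`, `1 < 3`. -/
def eesE13 : PES Bool where
  E := Fin 4
  le i j := i = j ∨ (i = 0 ∧ j = 2) ∨ (i = 0 ∧ j = 3) ∨ (i = 1 ∧ j = 3)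
  conflict _ _ := False
  lab i := decide (i.val < 2)
  le_refl _ := Or.inl rfl
  le_trans := by decide
  le_antisymm := by decide
  finite_past _ := Set.toFinite _
  conflict_irrefl _ h := h
  conflict_symm _ _ h := h
  conflict_inherit _ _ _ _ _ h := h

/-- Events `0,1` labelled `a`, events `2,3` labelled `b`; causality `0 < 2`, `1 < 3`. -/
def eesF13 : PES Bool where
  E := Fin 4
  le i j := i = j ∨ (i = 0 ∧ j = 2) ∨ (i = 1 ∧ j = 3)
  conflict _ _ := False
  lab i := decide (i.val < 2)
  le_refl _ := Or.inl rfl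
  le_trans := by decide
  le_antisymm := by decide
  finite_past _ := Set.toFinite _
  conflict_irrefl _ h := h
  conflict_symm _ _ h := h
  conflict_inherit _ _ _ _ _ h := h
namespace Aux13

abbrev FS := Finset (Fin 4)

def leE (i j : Fin 4) : Prop := i = j ∨ (i = 0 ∧ j = 2) ∨ (i = 0 ∧ j = 3) ∨ (i = 1 ∧ j = 3)
def leF (i j : Fin 4) : Prop := i = j ∨ (i = 0 ∧ j = 2) ∨ (i = 1 ∧ j = 3)
def lab (i : Fin 4) : Bool := decide (i.val < 2)

instance : DecidableEq eesE13.E := inferInstanceAs (DecidableEq (Fin 4))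
instance : DecidableEq eesF13.E := inferInstanceAs (DecidableEq (Fin 4))

instance (n : ℕ) : OfNat eesE13.E n := inferInstanceAs (OfNat (Fin 4) n)
instance (n : ℕ) : OfNat eesF13.E n := inferInstanceAs (OfNat (Fin 4) n)
instance : Finite eesE13.E := inferInstanceAs (Finite (Fin 4))
instance : Finite eesF13.E := inferInstanceAs (Finite (Fin 4))

instance : DecidableRel leE := fun _ _ => inferInstanceAs (Decidable (_ ∨ _))
instance : DecidableRel leF := fun _ _ => inferInstanceAs (Decidable (_ ∨ _))

def dcfg (r : Fin 4 → Fin 4 → Prop) [DecidableRel r] (F : FS) : Prop :=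
  ∀ e ∈ F, ∀ e', r e' e → e' ∈ F

def dstep (r : Fin 4 → Fin 4 → Prop) [DecidableRel r] (F F' : FS) : Prop :=
  dcfg r F ∧ dcfg r F' ∧ F ⊆ F' ∧ F ≠ F' ∧
    ∀ e ∈ F' \ F, ∀ e' ∈ F' \ F, e ≠ e' → ¬ r e e' ∧ ¬ r e' e

instance (r : Fin 4 → Fin 4 → Prop) [DecidableRel r] (F : FS) : Decidable (dcfg r F) := by
  unfold dcfg; infer_instance
instance (r : Fin 4 → Fin 4 → Prop) [DecidableRel r] (F F' : FS) : Decidable (dstep r F F') := by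
  unfold dstep; infer_instance

lemma configE_iff (F : FS) : eesE13.Config (↑F : Set (Fin 4)) ↔ dcfg leE F := by
  constructor
  · rintro ⟨-, -, h⟩ e he e' hle
    exact Finset.mem_coe.mp (h e (Finset.mem_coe.mpr he) e' hle)
  · intro h
    exact ⟨F.finite_toSet, fun e _ e' _ hc => hc,
      fun e he e' hle => Finset.mem_coe.mpr (h e (Finset.mem_coe.mp he) e' hle)⟩

lemma configF_iff (F : FS) : eesF13.Config (↑F : Set (Fin 4)) ↔ dcfg leF F := by
  constructor
  · rintro ⟨-, -, h⟩ e he e' hle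
    exact Finset.mem_coe.mp (h e (Finset.mem_coe.mpr he) e' hle)
  · intro h
    exact ⟨F.finite_toSet, fun e _ e' _ hc => hc,
      fun e he e' hle => Finset.mem_coe.mpr (h e (Finset.mem_coe.mp he) e' hle)⟩

lemma stepE_iff (F F' : FS) (m : Multiset Bool) :
    eesE13.StepTrans (↑F : Set (Fin 4)) m (↑F' : Set (Fin 4)) ↔ (dstep leE F F' ∧ m = (F' \ F).val.map lab) := by
  constructor
  · rintro ⟨hX, hX', hsub, G, hG, hne, hco, hm⟩
    have hGeq : G = F' \ F := by
      apply Finset.coe_injective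
      rw [hG]
      exact (Finset.coe_sdiff _ _).symm
    subst hGeq
    refine ⟨⟨(configE_iff F).mp hX, (configE_iff F').mp hX', Finset.coe_subset.mp hsub, ?_, ?_⟩, hm.symm⟩
    · rintro rfl
      simp at hne
      exact Finset.not_nonempty_empty hne
    · intro e he e' he' hee
      obtain ⟨h1, h2, -⟩ := hco e he e' he' hee
      exact ⟨h1, h2⟩
  · rintro ⟨⟨h1, h2, h3, h4, h5⟩, rfl⟩
    refine ⟨(configE_iff F).mpr h1, (configE_iff F').mpr h2, Finset.coe_subset.mpr h3,
      F' \ F, Finset.coe_sdiff _ _, ?_, ?_, rfl⟩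
    · refine Finset.sdiff_nonempty.mpr ?_
      intro hsub
      exact h4 (Finset.Subset.antisymm h3 hsub)
    · intro e he e' he' hee
      obtain ⟨c1, c2⟩ := h5 e he e' he' hee
      exact ⟨c1, c2, fun hc => hc⟩

lemma stepF_iff (F F' : FS) (m : Multiset Bool) :
    eesF13.StepTrans (↑F : Set (Fin 4)) m (↑F' : Set (Fin 4)) ↔ (dstep leF F F' ∧ m = (F' \ F).val.map lab) := by
  constructor
  · rintro ⟨hX, hX', hsub, G, hG, hne, hco, hm⟩
    have hGeq : G = F' \ F := by
      apply Finset.coe_injective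
      rw [hG]
      exact (Finset.coe_sdiff _ _).symm
    subst hGeq
    refine ⟨⟨(configF_iff F).mp hX, (configF_iff F').mp hX', Finset.coe_subset.mp hsub, ?_, ?_⟩, hm.symm⟩
    · rintro rfl
      simp at hne
      exact Finset.not_nonempty_empty hne
    · intro e he e' he' hee
      obtain ⟨h1, h2, -⟩ := hco e he e' he' hee
      exact ⟨h1, h2⟩
  · rintro ⟨⟨h1, h2, h3, h4, h5⟩, rfl⟩
    refine ⟨(configF_iff F).mpr h1, (configF_iff F').mpr h2, Finset.coe_subset.mpr h3,
      F' \ F, Finset.coe_sdiff _ _, ?_, ?_, rfl⟩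
    · refine Finset.sdiff_nonempty.mpr ?_
      intro hsub
      exact h4 (Finset.Subset.antisymm h3 hsub)
    · intro e he e' he' hee
      obtain ⟨c1, c2⟩ := h5 e he e' he' hee
      exact ⟨c1, c2, fun hc => hc⟩

end Aux13
namespace Aux13

def pairs1 : List (FS × FS) :=
  [(∅,∅), ({0},{0}), ({1},{0}), ({0,1},{0,1}), ({0,2},{0,2}),
   ({0,1,2},{0,1,2}), ({0,1,3},{0,1,3}), ({0,1,2,3},{0,1,2,3})]

def pairs2 : List (FS × FS) :=
  [(∅,∅), ({0},{0}), ({1},{0}), ({0,1},{0,1}), ({0,2},{0,2}), ({1,3},{0,2}),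
   ({0,1,2},{0,1,2}), ({0,1,3},{0,1,3}), ({0,1,3},{0,1,2}), ({0,1,2,3},{0,1,2,3})]

def R1 (F G : FS) : Prop := (F, G) ∈ pairs1
def R2 (F G : FS) : Prop := (F, G) ∈ pairs2

instance (F G : FS) : Decidable (R1 F G) := by unfold R1; infer_instance
instance (F G : FS) : Decidable (R2 F G) := by unfold R2; infer_instance

lemma cfg1 : ∀ F₁ F₂ : FS, R1 F₁ F₂ → dcfg leF F₂ := by decide
lemma cfg2 : ∀ F₁ F₂ : FS, R2 F₁ F₂ → dcfg leE F₂ := by decide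

set_option maxRecDepth 10000 in
lemma sim1 : ∀ F₁ F₂ F₁' : FS, R1 F₁ F₂ → dstep leE F₁ F₁' →
    ∃ F₂', dstep leF F₂ F₂' ∧ R1 F₁' F₂' ∧
      (F₁' \ F₁).val.map lab = (F₂' \ F₂).val.map lab := by decide

set_option maxRecDepth 10000 in
lemma sim2 : ∀ F₁ F₂ F₁' : FS, R2 F₁ F₂ → dstep leF F₁ F₁' →
    ∃ F₂', dstep leE F₂ F₂' ∧ R2 F₁' F₂' ∧
      (F₁' \ F₁).val.map lab = (F₂' \ F₂).val.map lab := by decide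

end Aux13
namespace Aux13

lemma traces1 : ∀ (s : List (Multiset Bool)) (F₁ F₂ : FS), R1 F₁ F₂ →
    eesE13.StepTraceFrom (↑F₁ : Set (Fin 4)) s →
    eesF13.StepTraceFrom (↑F₂ : Set (Fin 4)) s := by
  intro s
  induction s with
  | nil =>
    intro F₁ F₂ hR h
    exact (configF_iff F₂).mpr (cfg1 F₁ F₂ hR)
  | cons m s ih =>
    rintro F₁ F₂ hR ⟨X', hstep, htr⟩
    have hfin : X'.Finite := hstep.2.1.1
    have hcoe : ((show FS from hfin.toFinset) : Set (Fin 4)) = X' := hfin.coe_toFinset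
    rw [← hcoe] at hstep htr
    obtain ⟨hd, hm⟩ := (stepE_iff F₁ (show FS from hfin.toFinset) m).mp hstep
    obtain ⟨F₂', hd₂, hR', hmap⟩ := sim1 F₁ F₂ (show FS from hfin.toFinset) hR hd
    refine ⟨(↑F₂' : Set (Fin 4)), (stepF_iff F₂ F₂' m).mpr ⟨hd₂, ?_⟩, ih _ _ hR' htr⟩
    rw [hm, hmap]

lemma traces2 : ∀ (s : List (Multiset Bool)) (F₁ F₂ : FS), R2 F₁ F₂ →
    eesF13.StepTraceFrom (↑F₁ : Set (Fin 4)) s →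
    eesE13.StepTraceFrom (↑F₂ : Set (Fin 4)) s := by
  intro s
  induction s with
  | nil =>
    intro F₁ F₂ hR h
    exact (configE_iff F₂).mpr (cfg2 F₁ F₂ hR)
  | cons m s ih =>
    rintro F₁ F₂ hR ⟨X', hstep, htr⟩
    have hfin : X'.Finite := hstep.2.1.1
    have hcoe : ((show FS from hfin.toFinset) : Set (Fin 4)) = X' := hfin.coe_toFinset
    rw [← hcoe] at hstep htr
    obtain ⟨hd, hm⟩ := (stepF_iff F₁ (show FS from hfin.toFinset) m).mp hstep
    obtain ⟨F₂', hd₂, hR', hmap⟩ := sim2 F₁ F₂ (show FS from hfin.toFinset) hR hd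
    refine ⟨(↑F₂' : Set (Fin 4)), (stepE_iff F₂ F₂' m).mpr ⟨hd₂, ?_⟩, ih _ _ hR' htr⟩
    rw [hm, hmap]

lemma strEq : PES.STrEq eesE13 eesF13 := by
  intro s
  constructor
  · intro h
    have := traces1 s ∅ ∅ (by decide) (by rw [Finset.coe_empty]; exact h)
    rw [Finset.coe_empty] at this
    exact this
  · intro h
    have := traces2 s ∅ ∅ (by decide) (by rw [Finset.coe_empty]; exact h)
    rw [Finset.coe_empty] at this
    exact this

end Aux13
namespace Aux13

lemma cfgE_down {X : Set (Fin 4)} (h : ∀ x ∈ X, ∀ x', leE x' x → x' ∈ X) :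
    eesE13.Config X :=
  ⟨Set.toFinite _, fun _ _ _ _ hc => hc, h⟩

lemma cfgF_down {X : Set (Fin 4)} (h : ∀ x ∈ X, ∀ x', leF x' x → x' ∈ X) :
    eesF13.Config X :=
  ⟨Set.toFinite _, fun _ _ _ _ hc => hc, h⟩

lemma not_ib : ¬ PES.IBisimilar eesE13 eesF13 := by
  rintro ⟨R, hR0, hR⟩
  have cfg0E : eesE13.Config ∅ := cfgE_down (fun _ hx _ _ => False.elim hx)
  have cfg1E : eesE13.Config (insert (1 : Fin 4) ∅) := by
    apply cfgE_down
    intro x hx x' hl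
    change x ∈ (insert (1 : Fin 4) ∅ : Set (Fin 4)) at hx
    change x' ∈ (insert (1 : Fin 4) ∅ : Set (Fin 4))
    simp only [Set.mem_insert_iff, Set.mem_empty_iff_false, or_false] at hx ⊢
    subst hx
    exact (by decide : ∀ y : Fin 4, leE y 1 → y = 1) x' hl
  have h1 : eesE13.Trans ∅ true (insert (1 : Fin 4) ∅) :=
    ⟨cfg0E, cfg1E, 1, fun h => h, rfl, rfl⟩
  obtain ⟨Y, hYt, hRY⟩ := (hR ∅ ∅ hR0).1 true _ h1
  obtain ⟨-, hYcfg, e, -, rfl, hlabe⟩ := hYt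
  have he2 : e = 0 ∨ e = 1 :=
    (by decide : ∀ y : Fin 4, lab y = true → y = 0 ∨ y = 1) e hlabe
  -- build a b-transition from Y in F
  have hFt : ∃ Y', eesF13.Trans (insert e ∅) false Y' := by
    rcases he2 with rfl | rfl
    · refine ⟨insert 2 (insert 0 ∅), hYcfg, ?_, 2, by simp; exact (by decide : ¬ (2:Fin 4) = 0), rfl, rfl⟩
      apply cfgF_down
      intro x hx x' hl
      change x ∈ (insert (2 : Fin 4) (insert (0 : Fin 4) ∅) : Set (Fin 4)) at hx
      change x' ∈ (insert (2 : Fin 4) (insert (0 : Fin 4) ∅) : Set (Fin 4))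
      simp only [Set.mem_insert_iff, Set.mem_empty_iff_false, or_false] at hx ⊢
      exact (by decide : ∀ y y' : Fin 4, (y = 2 ∨ y = 0) → leF y' y → (y' = 2 ∨ y' = 0))
        x x' hx hl
    · refine ⟨insert 3 (insert 1 ∅), hYcfg, ?_, 3, by simp; exact (by decide : ¬ (3:Fin 4) = 1), rfl, rfl⟩
      apply cfgF_down
      intro x hx x' hl
      change x ∈ (insert (3 : Fin 4) (insert (1 : Fin 4) ∅) : Set (Fin 4)) at hx
      change x' ∈ (insert (3 : Fin 4) (insert (1 : Fin 4) ∅) : Set (Fin 4))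
      simp only [Set.mem_insert_iff, Set.mem_empty_iff_false, or_false] at hx ⊢
      exact (by decide : ∀ y y' : Fin 4, (y = 3 ∨ y = 1) → leF y' y → (y' = 3 ∨ y' = 1))
        x x' hx hl
  obtain ⟨Y', hYt'⟩ := hFt
  obtain ⟨X', hXt, -⟩ := (hR _ _ hRY).2 false Y' hYt'
  obtain ⟨-, hcfg', d', hd'n, rfl, hlabd⟩ := hXt
  have h0le : leE 0 d' :=
    (by decide : ∀ y : Fin 4, lab y = false → leE 0 y) d' hlabd
  have h0mem : (0 : Fin 4) ∈ insert d' (insert (1 : Fin 4) ∅) :=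
    hcfg'.2.2 d' (Set.mem_insert _ _) 0 h0le
  change (0 : Fin 4) = d' ∨ (0 : Fin 4) = 1 ∨ False at h0mem
  simp only [Set.mem_insert_iff, Set.mem_empty_iff_false, or_false] at h0mem
  rcases h0mem with h | h
  · rw [← h] at hlabd
    exact absurd hlabd (by decide)
  · exact absurd h (by decide)

end Aux13

theorem ees_st_not_ib :
    PES.STrEq eesE13 eesF13 ∧ ¬ PES.IBisimilar eesE13 eesF13 :=
  ⟨Aux13.strEq, Aux13.not_ib⟩
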